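/- In the free commutative nonassociative algebra K(x) on one variable x: (i) if f is a K-linear combination of the monomials x, x², x³ (so that in particular f is any candidate train polynomial of degree (2) or (3)) and ∂_x(f) = 0, then f = 0; (ii) for every n ≥ 4 and every commutative nonassociative monomial w of degree n with w ≠ x^n, there exists a unique element P_w of the K-linear span of the principal powers {x^k : 1 ≤ k ≤ n−1} such that ε(P_w) = 1 and ∂_x(w − P_w) = 0; moreover the coefficients of P_w are images of integers. Consequently w − P_w is a Peirce-evanescent identity. -/

import Mathlib

namespace Evanescent

universe u v

variable {T : Type u}

/-- The commutativity relation on the free magma on `T`. -/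
inductive CommRel (T : Type u) : FreeMagma T → FreeMagma T → Prop
  | comm (a b : FreeMagma T) : CommRel T (a * b) (b * a)
  | mul_left {a b : FreeMagma T} (c : FreeMagma T) :
      CommRel T a b → CommRel T (a * c) (b * c)
  | mul_right (c : FreeMagma T) {a b : FreeMagma T} :
      CommRel T a b → CommRel T (c * a) (c * b)

/-- The free commutative magma on `T`: the set of commutative nonassociative
monomials (words) in the variables `T`. -/
def FreeCommMagma (T : Type u) : Type u := Quot (CommRel T)

namespace FreeCommMagma

instance : Mul (FreeCommMagma T) :=
  ⟨Quot.map₂ (· * ·) (fun a _ _ h => CommRel.mul_right a h)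
    (fun _ _ b h => CommRel.mul_left b h)⟩

/-- The class of a nonassociative word in the free commutative magma. -/
def mk (w : FreeMagma T) : FreeCommMagma T := Quot.mk (CommRel T) w

/-- The generator of the free commutative magma corresponding to a variable. -/
def of (t : T) : FreeCommMagma T := mk (FreeMagma.of t)

@[simp] lemma mk_mul (a b : FreeMagma T) : mk a * mk b = mk (a * b) := rfl

protected lemma mul_comm (a b : FreeCommMagma T) : a * b = b * a := by
  induction a using Quot.ind
  induction b using Quot.ind
  exact Quot.sound (CommRel.comm _ _)

instance : CommMagma (FreeCommMagma T) := ⟨FreeCommMagma.mul_comm⟩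

end FreeCommMagma

section Peirce

variable (R : Type v) [Semiring R] [DecidableEq T]

/-- The Peirce polynomial of a (noncommutative) nonassociative word, with
coefficients in `R`. -/
noncomputable def peirceAux (i : T) : FreeMagma T → Polynomial R
  | .of j => if j = i then 1 else 0
  | .mul u v => Polynomial.X * (peirceAux i u + peirceAux i v)

@[simp] lemma peirceAux_mul (i : T) (u v : FreeMagma T) :
    peirceAux R i (u * v) = Polynomial.X * (peirceAux R i u + peirceAux R i v) := rfl

@[simp] lemma peirceAux_of (i j : T) :
    peirceAux R i (FreeMagma.of j) = if j = i then 1 else 0 := rfl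

/-- The number of occurrences of the variable `i` in a nonassociative word. -/
def countAux (i : T) : FreeMagma T → ℕ
  | .of j => if j = i then 1 else 0
  | .mul u v => countAux i u + countAux i v

@[simp] lemma countAux_mul (i : T) (u v : FreeMagma T) :
    countAux i (u * v) = countAux i u + countAux i v := rfl

lemma peirceAux_respects (i : T) {a b : FreeMagma T} (h : CommRel T a b) :
    peirceAux R i a = peirceAux R i b := by
  induction h with
  | comm a b => simp [add_comm]
  | mul_left c h ih => simp [ih]
  | mul_right c h ih => simp [ih]

lemma countAux_respects (i : T) {a b : FreeMagma T} (h : CommRel T a b) :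
    countAux i a = countAux i b := by
  induction h with
  | comm a b => simp [Nat.add_comm]
  | mul_left c h ih => simp [ih]
  | mul_right c h ih => simp [ih]

/-- The Peirce polynomial `∂ᵢ(w)` of a commutative nonassociative monomial `w`,
determined by `∂ᵢ(tᵢ) = 1`, `∂ᵢ(tⱼ) = 0` for `j ≠ i`, and
`∂ᵢ(u·v) = X·(∂ᵢ(u) + ∂ᵢ(v))`. -/
noncomputable def FreeCommMagma.peirce (i : T) : FreeCommMagma T → Polynomial R :=
  Quot.lift (peirceAux R i) fun _ _ h => peirceAux_respects R i h

/-- The number of occurrences (degree) of the variable `i` in a commutative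
nonassociative monomial. -/
def FreeCommMagma.count (i : T) : FreeCommMagma T → ℕ :=
  Quot.lift (countAux i) fun _ _ h => countAux_respects i h

end Peirce

/-- Principal powers of an element of a magma: `ppow a n = a^(n+1)`,
i.e. `ppow a 0 = a` and `ppow a (n+1) = a * (ppow a n)`. -/
def ppow {M : Type v} [Mul M] (a : M) : ℕ → M
  | 0 => a
  | n + 1 => a * ppow a n

/-- Iterated left multiplication: `lpow a r g = a^{{r}} g`, i.e. `lpow a 0 g = g` and
`lpow a (r+1) g = a * (lpow a r g)`. -/
def lpow {M : Type v} [Mul M] (a : M) : ℕ → M → M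
  | 0, g => g
  | r + 1, g => a * lpow a r g

section Algebra

variable (K : Type v) [Field K]

/-- A commutative nonassociative monomial, viewed as an element of the free
commutative nonassociative algebra `K(T)` (realized as the magma algebra of the
free commutative magma). -/
noncomputable def mono (w : FreeCommMagma T) : MonoidAlgebra K (FreeCommMagma T) :=
  MonoidAlgebra.single w 1

/-- The augmentation (sum of the coefficients) of an element of the free
commutative nonassociative algebra. -/
noncomputable def aug : MonoidAlgebra K (FreeCommMagma T) →ₗ[K] K :=
  (Finsupp.lsum K fun _ => LinearMap.id) ∘ₗ (MonoidAlgebra.coeffLinearEquiv K).toLinearMap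

/-- The Peirce polynomial `∂ᵢ : K(T) → K[X]`, the `K`-linear map determined on
monomials by `∂ᵢ(tᵢ) = 1`, `∂ᵢ(tⱼ) = 0` for `j ≠ i`, and `∂ᵢ(u·v) = X·(∂ᵢ(u) + ∂ᵢ(v))`. -/
noncomputable def Dp [DecidableEq T] (i : T) :
    MonoidAlgebra K (FreeCommMagma T) →ₗ[K] Polynomial K :=
  (Finsupp.lsum K fun w => LinearMap.toSpanSingleton K (Polynomial K)
    (FreeCommMagma.peirce K i w)) ∘ₗ (MonoidAlgebra.coeffLinearEquiv K).toLinearMap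

/-- The free commutative nonassociative algebra is commutative. -/
lemma fca_mul_comm (f g : MonoidAlgebra K (FreeCommMagma T)) : f * g = g * f := by
  rw [MonoidAlgebra.mul_def, MonoidAlgebra.mul_def, Finsupp.sum_comm]
  refine Finsupp.sum_congr fun a _ => Finsupp.sum_congr fun c _ => ?_
  rw [FreeCommMagma.mul_comm, mul_comm (f.coeff c) (g.coeff a)]

end Algebra

section Subst

variable (K : Type v) [Field K] {A : Type*} [Mul A]

/-- Evaluation of a nonassociative word under a substitution of the variables. -/
def evalAux (ρ : T → A) : FreeMagma T → A
  | .of t => ρ t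
  | .mul u v => evalAux ρ u * evalAux ρ v

@[simp] lemma evalAux_mul (ρ : T → A) (u v : FreeMagma T) :
    evalAux ρ (u * v) = evalAux ρ u * evalAux ρ v := rfl

/-- Evaluation of a commutative nonassociative monomial in a commutative magma
under a substitution of the variables. -/
def FreeCommMagma.eval (hA : ∀ a b : A, a * b = b * a) (ρ : T → A) :
    FreeCommMagma T → A :=
  Quot.lift (evalAux ρ) (by
    intro a b h
    induction h with
    | comm a b => exact hA _ _
    | mul_left c h ih => simp [ih]
    | mul_right c h ih => simp [ih])

/-- The substitution homomorphism `ρ̂ : K(T) → A` extending a substitution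
`ρ : T → A` of the variables, for `A` a commutative nonassociative `K`-algebra. -/
noncomputable def subst [AddCommMonoid A] [Module K A]
    (hA : ∀ a b : A, a * b = b * a) (ρ : T → A)
    (f : MonoidAlgebra K (FreeCommMagma T)) : A :=
  f.coeff.sum fun w c => c • FreeCommMagma.eval hA ρ w

end Subst

/-- The list of the leaves of a nonassociative word (a rooted binary tree with
leaves labeled by the variables), together with their heights. -/
def leaves : FreeMagma T → List (T × ℕ)
  | .of t => [(t, 0)]
  | .mul u v => (leaves u ++ leaves v).map fun p => (p.1, p.2 + 1)

end Evanescent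
namespace Evanescent

/-- The single variable `x` of `K(x)`, as a monomial. -/
def x1 : FreeCommMagma Unit := FreeCommMagma.of ()

end Evanescent

namespace Evanescent

open Polynomial

variable {K : Type*} [Field K]

/-- `D K k = ∂ₓ(x^(k+1))`. -/
noncomputable def D (K : Type*) [Field K] : ℕ → Polynomial K
  | 0 => 1
  | k + 1 => Polynomial.X * (1 + D K k)

/-- Principal powers in the free magma. -/
def mpow : ℕ → FreeMagma Unit
  | 0 => .of ()
  | k + 1 => .of () * mpow k

/-- The integer coefficients of the matching polynomial `P_w`. -/
def cf : FreeMagma Unit → ℕ → ℤ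
  | .of _, k => if k = 0 then 1 else 0
  | .mul u v, k =>
      (if k = 0 then 0 else cf u (k - 1) + cf v (k - 1)) - (if k = 1 then 1 else 0)

lemma cf_mul (u v : FreeMagma Unit) (k : ℕ) :
    cf (u * v) k =
      (if k = 0 then 0 else cf u (k - 1) + cf v (k - 1)) - (if k = 1 then 1 else 0) := rfl

lemma mk_mpow (k : ℕ) : FreeCommMagma.mk (mpow k) = ppow x1 k := by
  induction k with
  | zero => rfl
  | succ k ih => show FreeCommMagma.mk (.of () * mpow k) = x1 * ppow x1 k
                 rw [← FreeCommMagma.mk_mul, ih]; rfl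

lemma countAux_mpow (k : ℕ) : countAux () (mpow k) = k + 1 := by
  induction k with
  | zero => rfl
  | succ k ih => show countAux () (.of () * mpow k) = k + 2
                 rw [countAux_mul, ih]
                 simp [countAux]
                 omega

lemma count_ppow (k : ℕ) : FreeCommMagma.count () (ppow x1 k) = k + 1 := by
  rw [← mk_mpow]; exact countAux_mpow k

lemma peirceAux_mpow (k : ℕ) : peirceAux K () (mpow k) = D K k := by
  induction k with
  | zero => show (if _ then _ else _) = _; simp [D]
  | succ k ih =>
      show peirceAux K () (.of () * mpow k) = D K (k + 1)
      rw [peirceAux_mul, ih]; simp [D]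

lemma countAux_pos (u : FreeMagma Unit) : 1 ≤ countAux () u := by
  induction u with
  | ih1 t => simp [countAux]
  | ih2 a b iha ihb => rw [countAux_mul]; omega

lemma eq_of_countAux_eq_one {u : FreeMagma Unit} (h : countAux () u = 1) :
    u = .of () := by
  cases u with
  | of t => rfl
  | mul a b =>
      have := countAux_pos a; have := countAux_pos b
      rw [show a.mul b = a * b from rfl, countAux_mul] at h; omega

lemma D_coeff_of_lt {k j : ℕ} (h : k < j) : (D K k).coeff j = 0 := by
  induction k generalizing j with
  | zero => rw [D, Polynomial.coeff_one, if_neg (by omega : ¬ j = 0)]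
  | succ k ih =>
      obtain ⟨j, rfl⟩ : ∃ m, j = m + 1 := ⟨j - 1, by omega⟩
      rw [D, Polynomial.coeff_X_mul, Polynomial.coeff_add, ih (by omega),
        Polynomial.coeff_one, if_neg (by omega : ¬ j = 0), add_zero]

lemma D_coeff_self (k : ℕ) : (D K k).coeff k = if k = 0 then 1 else 2 := by
  induction k with
  | zero => simp [D]
  | succ k ih =>
      rcases Nat.eq_zero_or_pos k with rfl | hk
      · rw [D, D, Polynomial.coeff_X_mul]; norm_num
      · rw [D, Polynomial.coeff_X_mul, Polynomial.coeff_add, ih,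
          if_neg hk.ne', if_neg (by omega : ¬ k + 1 = 0),
          Polynomial.coeff_one, if_neg hk.ne']
        ring

lemma peirceAux_coeff_eq_zero {u : FreeMagma Unit} {j : ℕ}
    (h : countAux () u ≤ j) : (peirceAux K () u).coeff j = 0 := by
  induction u generalizing j with
  | ih1 t =>
      have hj : j ≠ 0 := by simp [countAux] at h; omega
      simp [Polynomial.coeff_one, hj]
  | ih2 a b iha ihb =>
      have ha := countAux_pos a; have hb := countAux_pos b
      rw [countAux_mul] at h
      obtain ⟨j, rfl⟩ : ∃ m, j = m + 1 := ⟨j - 1, by omega⟩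
      rw [peirceAux_mul, Polynomial.coeff_X_mul, Polynomial.coeff_add,
        iha (by omega), ihb (by omega), add_zero]

end Evanescent

namespace Evanescent

variable {K : Type*} [Field K]

/-- A monomial with a leaf at maximal height is the principal power. -/
lemma mk_eq_ppow_of_top_coeff {u : FreeMagma Unit}
    (h : (peirceAux K () u).coeff (countAux () u - 1) ≠ 0) :
    FreeCommMagma.mk u = ppow x1 (countAux () u - 1) := by
  induction u with
  | ih1 t => simp [countAux]; rfl
  | ih2 a b iha ihb =>
      have ha := countAux_pos a; have hb := countAux_pos b
      rw [countAux_mul] at h ⊢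
      set p := countAux () a with hp
      set q := countAux () b with hq
      rw [peirceAux_mul, show p + q - 1 = (p + q - 2) + 1 by omega,
        Polynomial.coeff_X_mul, Polynomial.coeff_add] at h
      rcases (by
        by_contra hc
        push_neg at hc
        rw [hc.1, hc.2, add_zero] at h
        exact h rfl :
        (peirceAux K () a).coeff (p + q - 2) ≠ 0 ∨
        (peirceAux K () b).coeff (p + q - 2) ≠ 0) with hca | hcb
      · have hq1 : q = 1 := by
          by_contra hq1
          exact hca (peirceAux_coeff_eq_zero (by omega))
        have hb1 : b = .of () := eq_of_countAux_eq_one (hq.symm ▸ hq1)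
        have : FreeCommMagma.mk a = ppow x1 (p - 1) := by
          apply iha; rwa [show p - 1 = p + q - 2 by omega]
        subst hb1
        rw [← FreeCommMagma.mk_mul, this, show FreeCommMagma.mk (.of ()) = x1 from rfl,
          FreeCommMagma.mul_comm, show p + q - 1 = (p - 1) + 1 by omega]
        rfl
      · have hp1 : p = 1 := by
          by_contra hp1
          exact hcb (peirceAux_coeff_eq_zero (by omega))
        have ha1 : a = .of () := eq_of_countAux_eq_one (hp.symm ▸ hp1)
        have : FreeCommMagma.mk b = ppow x1 (q - 1) := by
          apply ihb; rwa [show q - 1 = p + q - 2 by omega]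
        subst ha1
        rw [← FreeCommMagma.mk_mul, this, show FreeCommMagma.mk (.of ()) = x1 from rfl,
          show p + q - 1 = (q - 1) + 1 by omega]
        rfl

lemma cf_eq_zero {u : FreeMagma Unit} {k : ℕ} (h : countAux () u ≤ k) :
    cf u k = 0 := by
  induction u generalizing k with
  | ih1 t =>
      have hk : k ≠ 0 := by have := countAux_pos (FreeMagma.of t); omega
      simp [cf, hk]
  | ih2 a b iha ihb =>
      have ha := countAux_pos a; have hb := countAux_pos b
      rw [countAux_mul] at h
      rw [cf_mul, if_neg (by omega : ¬ k = 0), if_neg (by omega : ¬ k = 1),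
        iha (by omega), ihb (by omega)]
      ring

lemma cf_sum (u : FreeMagma Unit) {N : ℕ} (hN : countAux () u ≤ N) :
    ∑ k ∈ Finset.range N, cf u k = 1 := by
  induction u generalizing N with
  | ih1 t =>
      have := countAux_pos (FreeMagma.of t)
      obtain ⟨M, rfl⟩ : ∃ m, N = m + 1 := ⟨N - 1, by omega⟩
      rw [Finset.sum_range_succ']
      have h0 : cf (.of ()) 0 = 1 := rfl
      have : ∀ i, cf (FreeMagma.of ()) (i + 1) = 0 := fun i => rfl
      simp [this, h0]
  | ih2 a b iha ihb =>
      have ha := countAux_pos a; have hb := countAux_pos b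
      rw [countAux_mul] at hN
      obtain ⟨M, rfl⟩ : ∃ m, N = m + 1 := ⟨N - 1, by omega⟩
      rw [Finset.sum_range_succ']
      have h0 : cf (a * b) 0 = 0 := by rw [cf_mul]; norm_num
      have h1 : ∀ i, cf (a * b) (i + 1) =
          cf a i + cf b i - (if i = 0 then 1 else 0) := by
        intro i
        rw [cf_mul, if_neg (Nat.succ_ne_zero i)]
        simp [Nat.succ_eq_add_one]
      rw [h0, add_zero]
      simp only [h1]
      rw [Finset.sum_sub_distrib, Finset.sum_add_distrib,
        iha (by omega), ihb (by omega), Finset.sum_ite_eq' (Finset.range M) 0]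
      simp [Finset.mem_range, (by omega : 0 < M)]

end Evanescent

namespace Evanescent

open Polynomial

variable {K : Type*} [Field K]

lemma sum_C_mul_D (c : ℕ → K) (M : ℕ) :
    ∑ i ∈ Finset.range M, Polynomial.C (c i) * (Polynomial.X * (1 + D K i))
      = Polynomial.X * (Polynomial.C (∑ i ∈ Finset.range M, c i)
          + ∑ i ∈ Finset.range M, Polynomial.C (c i) * D K i) := by
  rw [map_sum, mul_add, Finset.mul_sum, Finset.mul_sum, ← Finset.sum_add_distrib]
  exact Finset.sum_congr rfl fun i _ => by ring

lemma cf_peirce (u : FreeMagma Unit) {N : ℕ} (hN : countAux () u ≤ N) :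
    ∑ k ∈ Finset.range N, (cf u k : K) • D K k = peirceAux K () u := by
  simp only [Polynomial.smul_eq_C_mul]
  induction u generalizing N with
  | ih1 t =>
      have := countAux_pos (FreeMagma.of t)
      obtain ⟨M, rfl⟩ : ∃ m, N = m + 1 := ⟨N - 1, by omega⟩
      rw [Finset.sum_range_succ']
      have h1 : ∀ i : ℕ, Polynomial.C ((cf (FreeMagma.of t) (i + 1) : K)) * D K (i + 1)
          = 0 := by
        intro i
        show Polynomial.C (((0 : ℤ) : K)) * D K (i + 1) = 0
        simp
      simp only [h1, Finset.sum_const_zero, zero_add]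
      show Polynomial.C (((1 : ℤ) : K)) * D K 0 = _
      simp [D]
  | ih2 a b iha ihb =>
      have ha := countAux_pos a; have hb := countAux_pos b
      rw [countAux_mul] at hN
      obtain ⟨M, rfl⟩ : ∃ m, N = m + 1 := ⟨N - 1, by omega⟩
      have hMa : countAux () a ≤ M := by omega
      have hMb : countAux () b ≤ M := by omega
      rw [Finset.sum_range_succ']
      have h0 : Polynomial.C ((cf (a * b) 0 : K)) * D K 0 = 0 := by
        rw [cf_mul]; norm_num
      have h1 : ∀ i : ℕ, Polynomial.C ((cf (a * b) (i + 1) : K)) * D K (i + 1)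
          = Polynomial.C ((cf a i : K)) * (Polynomial.X * (1 + D K i))
            + Polynomial.C ((cf b i : K)) * (Polynomial.X * (1 + D K i))
            - (if i = 0 then 1 else 0) * (Polynomial.X * (1 + D K i)) := by
        intro i
        rw [cf_mul, if_neg (Nat.succ_ne_zero i), Nat.add_sub_cancel,
          show D K (i + 1) = Polynomial.X * (1 + D K i) from rfl]
        simp only [show (i + 1 = 1) ↔ (i = 0) from by omega]
        push_cast
        rw [map_sub, map_add, apply_ite (Polynomial.C : K → Polynomial K), map_one, map_zero]
        ring
      rw [h0, add_zero]
      simp only [h1]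
      rw [Finset.sum_sub_distrib, Finset.sum_add_distrib, sum_C_mul_D, sum_C_mul_D]
      have hsa : ∑ i ∈ Finset.range M, ((cf a i : K)) = 1 := by
        have := cf_sum a hMa
        have : ((∑ k ∈ Finset.range M, cf a k : ℤ) : K) = ((1 : ℤ) : K) := by rw [this]
        push_cast at this
        exact this
      have hsb : ∑ i ∈ Finset.range M, ((cf b i : K)) = 1 := by
        have := cf_sum b hMb
        have : ((∑ k ∈ Finset.range M, cf b k : ℤ) : K) = ((1 : ℤ) : K) := by rw [this]
        push_cast at this
        exact this
      have hdel : ∑ i ∈ Finset.range M,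
          (if i = 0 then 1 else 0) * (Polynomial.X * (1 + D K i))
          = Polynomial.X * (1 + D K 0) := by
        rw [Finset.sum_congr rfl (fun i _ => ite_mul (i = 0) 1 0 _)]
        simp only [one_mul, zero_mul]
        rw [Finset.sum_ite_eq' (Finset.range M) 0 (fun i => Polynomial.X * (1 + D K i))]
        simp [Finset.mem_range, (by omega : 0 < M)]
      rw [hdel, hsa, hsb, iha hMa, ihb hMb, peirceAux_mul]
      show _ = Polynomial.X * (peirceAux K () a + peirceAux K () b)
      rw [show D K 0 = 1 from rfl, map_one]
      ring

end Evanescent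

namespace Evanescent

open Polynomial

variable {K : Type*} [Field K]

lemma D_indep (hchar : (2 : K) ≠ 0) :
    ∀ (N : ℕ) (e : ℕ → K), (∑ k ∈ Finset.range N, e k • D K k = 0) →
      ∀ k < N, e k = 0 := by
  intro N
  induction N with
  | zero => intro e _ k hk; omega
  | succ N ih =>
      intro e h k hk
      have htop : e N = 0 := by
        have hc := congrArg (fun p => Polynomial.coeff p N) h
        simp only [Polynomial.finset_sum_coeff, Polynomial.coeff_smul,
          Polynomial.coeff_zero, smul_eq_mul] at hc
        rw [Finset.sum_range_succ, D_coeff_self] at hc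
        have hz : ∀ j ∈ Finset.range N, e j * (D K j).coeff N = 0 := by
          intro j hj
          rw [D_coeff_of_lt (Finset.mem_range.mp hj), mul_zero]
        rw [Finset.sum_eq_zero hz, zero_add] at hc
        rcases Nat.eq_zero_or_pos N with rfl | hN
        · simpa using hc
        · rw [if_neg hN.ne'] at hc
          exact (mul_eq_zero.mp hc).resolve_right hchar
      have h' : ∑ k ∈ Finset.range N, e k • D K k = 0 := by
        rw [Finset.sum_range_succ, htop, zero_smul, add_zero] at h
        exact h
      rcases Nat.lt_succ_iff_lt_or_eq.mp hk with hk' | rfl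
      · exact ih e h' k hk'
      · exact htop

lemma mono_ppow_inj : Function.Injective fun k => mono (T := Unit) K (ppow x1 k) := by
  intro i j h
  have h2 : ppow x1 i = ppow x1 j := by
    exact (MonoidAlgebra.single_left_inj one_ne_zero).mp h
  have h3 := congrArg (FreeCommMagma.count ()) h2
  rw [count_ppow, count_ppow] at h3
  omega

lemma mem_span_iff (m : ℕ) (P : MonoidAlgebra K (FreeCommMagma Unit)) :
    P ∈ Submodule.span K ((fun k => mono K (ppow x1 k)) '' Set.Iio m) ↔
      ∃ a : ℕ → K, P = ∑ k ∈ Finset.range m, a k • mono K (ppow x1 k) := by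
  classical
  have himg : (fun k => mono (T := Unit) K (ppow x1 k)) '' Set.Iio m
      = ↑(Finset.image (fun k => mono (T := Unit) K (ppow x1 k)) (Finset.range m)) := by
    rw [Finset.coe_image, Finset.coe_range]
  constructor
  · intro hP
    rw [himg] at hP
    obtain ⟨f, -, hf⟩ := Submodule.mem_span_finset.mp hP
    refine ⟨fun k => f (mono K (ppow x1 k)), ?_⟩
    rw [← hf, Finset.sum_image (fun i _ j _ hij => mono_ppow_inj hij)]
  · rintro ⟨a, rfl⟩
    exact Submodule.sum_mem _ fun k hk => Submodule.smul_mem _ _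
      (Submodule.subset_span ⟨k, Finset.mem_range.mp hk, rfl⟩)

lemma Dp_mono (w : FreeCommMagma Unit) :
    Dp K () (mono K w) = FreeCommMagma.peirce K () w := by
  show Dp K () (MonoidAlgebra.single w 1) = _
  rw [Dp, LinearMap.comp_apply]
  change (Finsupp.lsum K _) (Finsupp.single w (1 : K)) = _
  erw [Finsupp.lsum_single]
  exact one_smul K _

lemma aug_mono (w : FreeCommMagma Unit) : aug K (mono K w) = 1 := by
  show aug K (MonoidAlgebra.single w 1) = 1
  rw [aug, LinearMap.comp_apply]
  change (Finsupp.lsum K _) (Finsupp.single w (1 : K)) = _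
  erw [Finsupp.lsum_single]
  rfl

lemma peirce_mk (u : FreeMagma Unit) :
    FreeCommMagma.peirce K () (FreeCommMagma.mk u) = peirceAux K () u := rfl

lemma count_mk (u : FreeMagma Unit) :
    FreeCommMagma.count () (FreeCommMagma.mk u) = countAux () u := rfl

end Evanescent

namespace Evanescent

variable {K : Type*} [Field K]

lemma Dp_sum (m : ℕ) (a : ℕ → K) :
    Dp K () (∑ k ∈ Finset.range m, a k • mono K (ppow x1 k))
      = ∑ k ∈ Finset.range m, a k • D K k := by
  rw [map_sum]
  exact Finset.sum_congr rfl fun k _ => by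
    rw [map_smul, Dp_mono, ← mk_mpow, peirce_mk, peirceAux_mpow]

lemma aug_sum (m : ℕ) (a : ℕ → K) :
    aug K (∑ k ∈ Finset.range m, a k • mono K (ppow x1 k))
      = ∑ k ∈ Finset.range m, a k := by
  rw [map_sum]
  exact Finset.sum_congr rfl fun k _ => by
    rw [map_smul, aug_mono, smul_eq_mul, mul_one]

end Evanescent


open Evanescent in
/-- (i) No nonzero train polynomial of degree `(2)` or `(3)` is
Peirce-evanescent; (ii) for `n ≥ 4` and every monomial `w ≠ xⁿ` of degree `n` there is a
unique `P_w` in the span of the principal powers `x^k`, `1 ≤ k ≤ n-1`, with `ε(P_w) = 1`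
and `∂ₓ(w - P_w) = 0`; moreover `P_w` has integer coefficients and `w - P_w` is a
Peirce-evanescent identity.  (Here `ppow x1 k` denotes `x^(k+1)`.) -/
theorem train_identities_univariate
    {K : Type*} [Field K] (hchar : (2 : K) ≠ 0) :
    (∀ a b c : K,
      Dp K () (a • mono K (ppow x1 0) + b • mono K (ppow x1 1) + c • mono K (ppow x1 2)) = 0 →
      a • mono K (ppow x1 0) + b • mono K (ppow x1 1) + c • mono K (ppow x1 2) = 0) ∧
    (∀ n : ℕ, 4 ≤ n → ∀ w : FreeCommMagma Unit,
      FreeCommMagma.count () w = n → w ≠ ppow x1 (n - 1) →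
      (∃! P : MonoidAlgebra K (FreeCommMagma Unit),
        P ∈ Submodule.span K ((fun k => mono K (ppow x1 k)) '' Set.Iio (n - 1)) ∧
        aug K P = 1 ∧ Dp K () (mono K w - P) = 0) ∧
      (∀ P : MonoidAlgebra K (FreeCommMagma Unit),
        P ∈ Submodule.span K ((fun k => mono K (ppow x1 k)) '' Set.Iio (n - 1)) →
        aug K P = 1 → Dp K () (mono K w - P) = 0 →
        (∃ c : ℕ → ℤ, P = ∑ k ∈ Finset.range (n - 1), (c k : K) • mono K (ppow x1 k)) ∧
        mono K w - P ≠ 0 ∧ aug K (mono K w - P) = 0)) := by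
  
  constructor
  · -- part (i)
    intro a b c h
    set e : ℕ → K := fun k => if k = 0 then a else if k = 1 then b else c with he
    have hexp : a • mono K (ppow x1 0) + b • mono K (ppow x1 1) + c • mono K (ppow x1 2)
        = ∑ k ∈ Finset.range 3, e k • mono K (ppow x1 k) := by
      rw [Finset.sum_range_succ, Finset.sum_range_succ, Finset.sum_range_one]
      norm_num [he]
    rw [hexp, Dp_sum] at h
    have h0 := D_indep hchar 3 e h 0 (by norm_num)
    have h1 := D_indep hchar 3 e h 1 (by norm_num)
    have h2 := D_indep hchar 3 e h 2 (by norm_num)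
    simp only [he] at h0 h1 h2
    norm_num at h0 h1 h2
    rw [h0, h1, h2]
    simp
  · -- part (ii)
    intro n hn w hcnt hne
    obtain ⟨u, rfl⟩ := Quot.exists_rep w
    obtain ⟨m, rfl⟩ : ∃ m, n = m + 1 := ⟨n - 1, by omega⟩
    have hm3 : 3 ≤ m := by omega
    simp only [Nat.add_sub_cancel] at hne ⊢
    have hcu : countAux () u = m + 1 := hcnt
    -- top coefficient vanishes
    have htopK : ((cf u m : ℤ) : K) = 0 := by
      have hcoef : (peirceAux K () u).coeff m = 0 := by
        by_contra hc
        apply hne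
        have := mk_eq_ppow_of_top_coeff (u := u) (K := K)
          (by rw [hcu, Nat.add_sub_cancel]; exact hc)
        rw [hcu, Nat.add_sub_cancel] at this
        exact this
      have hs := cf_peirce (K := K) u (le_of_eq hcu)
      have hcs := congrArg (fun p => Polynomial.coeff p m) hs
      simp only [Polynomial.finset_sum_coeff, Polynomial.coeff_smul, smul_eq_mul] at hcs
      rw [hcoef, Finset.sum_range_succ] at hcs
      rw [Finset.sum_eq_zero (fun j hj => by
        rw [D_coeff_of_lt (Finset.mem_range.mp hj), mul_zero]), zero_add,
        D_coeff_self, if_neg (by omega : ¬ m = 0)] at hcs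
      exact (mul_eq_zero.mp hcs).resolve_right hchar
    set P₀ : MonoidAlgebra K (FreeCommMagma Unit) :=
      ∑ k ∈ Finset.range m, ((cf u k : ℤ) : K) • mono K (ppow x1 k) with hP₀
    have hDpP₀ : Dp K () P₀ = peirceAux K () u := by
      rw [hP₀, Dp_sum]
      have hfull := cf_peirce (K := K) u (le_of_eq hcu)
      rw [Finset.sum_range_succ, htopK, zero_smul, add_zero] at hfull
      exact hfull
    have haugP₀ : aug K P₀ = 1 := by
      rw [hP₀, aug_sum]
      have h1 := cf_sum u (le_of_eq hcu)
      have h2 : ∑ k ∈ Finset.range (m + 1), ((cf u k : ℤ) : K) = 1 := by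
        have := congrArg (fun z : ℤ => (z : K)) h1
        push_cast at this
        exact this
      rw [Finset.sum_range_succ, htopK, add_zero] at h2
      exact h2
    have hDpw : Dp K () (mono K (Quot.mk (CommRel Unit) u)) = peirceAux K () u := Dp_mono _
    have hsat : Dp K () (mono K (Quot.mk (CommRel Unit) u) - P₀) = 0 := by
      rw [map_sub, hDpw, hDpP₀, sub_self]
    have hspan : P₀ ∈ Submodule.span K ((fun k => mono K (ppow x1 k)) '' Set.Iio m) :=
      (mem_span_iff _ _).2 ⟨_, hP₀⟩
    have huniq : ∀ P : MonoidAlgebra K (FreeCommMagma Unit),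
        P ∈ Submodule.span K ((fun k => mono K (ppow x1 k)) '' Set.Iio m) →
        Dp K () (mono K (Quot.mk (CommRel Unit) u) - P) = 0 → P = P₀ := by
      intro P hsp hdp
      obtain ⟨aP, rfl⟩ := (mem_span_iff _ _).1 hsp
      have e1 : ∑ k ∈ Finset.range m, aP k • D K k = peirceAux K () u := by
        rw [map_sub, hDpw, sub_eq_zero, Dp_sum] at hdp
        exact hdp.symm
      have e2 : ∑ k ∈ Finset.range m, ((cf u k : ℤ) : K) • D K k
          = peirceAux K () u := by
        rw [← Dp_sum, ← hP₀]
        exact hDpP₀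
      have h0 : ∑ k ∈ Finset.range m, (aP k - ((cf u k : ℤ) : K)) • D K k = 0 := by
        simp only [sub_smul]
        rw [Finset.sum_sub_distrib, e1, e2, sub_self]
      have hz := D_indep hchar m _ h0
      rw [hP₀]
      refine Finset.sum_congr rfl fun k hk => ?_
      have hzk := hz k (Finset.mem_range.mp hk)
      rw [sub_eq_zero] at hzk
      rw [hzk]
    refine ⟨⟨P₀, ⟨hspan, haugP₀, hsat⟩, fun P hP => huniq P hP.1 hP.2.2⟩, ?_⟩
    intro P hsp haugP hdp
    have hP : P = P₀ := huniq P hsp hdp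
    refine ⟨⟨fun k => cf u k, by rw [hP]⟩, ?_, ?_⟩
    · rw [hP]
      intro hzero
      have h1 : (mono K (Quot.mk (CommRel Unit) u) - P₀).coeff (Quot.mk (CommRel Unit) u) = 0 := by
        rw [hzero]; rfl
      erw [MonoidAlgebra.coeff_sub, Finsupp.sub_apply] at h1
      have hmw : (mono K (Quot.mk (CommRel Unit) u)).coeff (Quot.mk (CommRel Unit) u) = 1 :=
        Finsupp.single_eq_same
      have hPw : P₀.coeff (Quot.mk (CommRel Unit) u) = 0 := by
        rw [hP₀, MonoidAlgebra.coeff_sum]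
        erw [Finsupp.finset_sum_apply]
        refine Finset.sum_eq_zero fun k hk => ?_
        have hne2 : ppow x1 k ≠ Quot.mk (CommRel Unit) u := by
          intro heq
          have hc := congrArg (FreeCommMagma.count ()) heq
          rw [count_ppow,
            show FreeCommMagma.count () (Quot.mk (CommRel Unit) u) = countAux () u from rfl,
            hcu] at hc
          have hk' := Finset.mem_range.mp hk
          omega
        erw [MonoidAlgebra.coeff_smul, Finsupp.smul_apply]
        erw [Finsupp.single_eq_of_ne hne2.symm]
        exact smul_zero _
      rw [hmw, hPw, sub_zero] at h1
      exact one_ne_zero h1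
    · rw [map_sub, haugP]; exact sub_eq_zero.mpr (aug_mono _)
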